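/- Let s_j, s_{j+1}, y_j, y_{j+1} ∈ ℝⁿ satisfy s_j^T y_j > 0 and s_{j+1}^T y_{j+1} > 0, and suppose s_j = τ s_{j+1} for some nonzero τ ∈ ℝ. Define ρ_i = 1/(s_i^T y_i), U_i = I − ρ_i y_i s_i^T and V_i = ρ_i s_i s_i^T for i ∈ {j, j+1}. Then for every matrix W ∈ ℝ^{n×n}, U_{j+1}^T U_j^T W U_j U_{j+1} + U_{j+1}^T V_j U_{j+1} + V_{j+1} = U_{j+1}^T W U_{j+1} + V_{j+1}; that is, performing the BFGS update corresponding to (s_j, y_j) followed by the update corresponding to (s_{j+1}, y_{j+1}) yields the same matrix as performing only the update corresponding to (s_{j+1}, y_{j+1}). -/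

import Mathlib

open Matrix

lemma vecMul_vecMulVec' {n : ℕ} (x w v : Fin n → ℝ) :
    x ᵥ* Matrix.vecMulVec w v = (x ⬝ᵥ w) • v := by
  ext j
  simp [Matrix.vecMul, Matrix.vecMulVec, dotProduct, Finset.sum_mul, mul_assoc]

lemma vecMul_smulMat' {n : ℕ} (c : ℝ) (x : Fin n → ℝ) (M : Matrix (Fin n) (Fin n) ℝ) :
    x ᵥ* (c • M) = c • (x ᵥ* M) := by
  ext j
  simp [Matrix.vecMul, dotProduct, Finset.mul_sum, mul_left_comm]

lemma vecMulVec_mul' {n : ℕ} (w v : Fin n → ℝ) (M : Matrix (Fin n) (Fin n) ℝ) :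
    Matrix.vecMulVec w v * M = Matrix.vecMulVec w (v ᵥ* M) := by
  ext i j
  simp [Matrix.mul_apply, Matrix.vecMulVec, Matrix.vecMul, dotProduct,
    Finset.mul_sum, mul_assoc]

theorem bfgs_update_overwrite {n : ℕ}
    (sj sj1 yj yj1 : Fin n → ℝ)
    (hj : 0 < sj ⬝ᵥ yj) (hj1 : 0 < sj1 ⬝ᵥ yj1)
    (τ : ℝ) (hτ : τ ≠ 0) (hs : sj = τ • sj1) :
    ∀ W : Matrix (Fin n) (Fin n) ℝ,
      letI ρj : ℝ := 1 / (sj ⬝ᵥ yj)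
      letI ρj1 : ℝ := 1 / (sj1 ⬝ᵥ yj1)
      letI Uj : Matrix (Fin n) (Fin n) ℝ := 1 - ρj • Matrix.vecMulVec yj sj
      letI Uj1 : Matrix (Fin n) (Fin n) ℝ := 1 - ρj1 • Matrix.vecMulVec yj1 sj1
      letI Vj : Matrix (Fin n) (Fin n) ℝ := ρj • Matrix.vecMulVec sj sj
      letI Vj1 : Matrix (Fin n) (Fin n) ℝ := ρj1 • Matrix.vecMulVec sj1 sj1
      Uj1ᵀ * (Ujᵀ * W * Uj) * Uj1 + Uj1ᵀ * Vj * Uj1 + Vj1 = Uj1ᵀ * W * Uj1 + Vj1 := by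
  intro W
  set ρj : ℝ := 1 / (sj ⬝ᵥ yj) with hρj
  set ρj1 : ℝ := 1 / (sj1 ⬝ᵥ yj1) with hρj1
  set Uj : Matrix (Fin n) (Fin n) ℝ := 1 - ρj • Matrix.vecMulVec yj sj with hUj
  set Uj1 : Matrix (Fin n) (Fin n) ℝ := 1 - ρj1 • Matrix.vecMulVec yj1 sj1 with hUj1
  set Vj : Matrix (Fin n) (Fin n) ℝ := ρj • Matrix.vecMulVec sj sj with hVj
  have hd1 : (sj1 ⬝ᵥ yj1) ≠ 0 := ne_of_gt hj1
  -- sj annihilates Uj1 from the left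
  have hkey : sj ᵥ* Uj1 = 0 := by
    rw [hUj1, Matrix.vecMul_sub, Matrix.vecMul_one, vecMul_smulMat',
      vecMul_vecMulVec']
    have hdot : sj ⬝ᵥ yj1 = τ * (sj1 ⬝ᵥ yj1) := by
      rw [hs, smul_dotProduct, smul_eq_mul]
    rw [hdot, hs, hρj1]
    ext i
    simp only [Pi.sub_apply, Pi.smul_apply, smul_eq_mul, Pi.zero_apply]
    field_simp
    ring
  have hz : ∀ a : Fin n → ℝ, Matrix.vecMulVec a sj * Uj1 = 0 := by
    intro a
    rw [vecMulVec_mul', hkey]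
    ext i j
    simp [Matrix.vecMulVec]
  have hUU : Uj * Uj1 = Uj1 := by
    rw [hUj, Matrix.sub_mul, Matrix.one_mul, Matrix.smul_mul, hz, smul_zero, sub_zero]
  have hVU : Vj * Uj1 = 0 := by
    rw [hVj, Matrix.smul_mul, hz, smul_zero]
  have h1 : Uj1ᵀ * (Ujᵀ * W * Uj) * Uj1 = Uj1ᵀ * W * Uj1 := by
    calc Uj1ᵀ * (Ujᵀ * W * Uj) * Uj1 = (Uj * Uj1)ᵀ * W * (Uj * Uj1) := by
          simp only [Matrix.transpose_mul, Matrix.mul_assoc]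
      _ = Uj1ᵀ * W * Uj1 := by rw [hUU]
  have h2 : Uj1ᵀ * Vj * Uj1 = 0 := by
    rw [Matrix.mul_assoc, hVU, Matrix.mul_zero]
  rw [h1, h2, add_zero]
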